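/- Let k be a field and let a, b, c, d be four distinct elements of the projective line P¹(k). Then there exists a unique element Γ of PGL₂(k) such that Γ(a) = b, Γ(b) = a, Γ(c) = d, and Γ(d) = c; moreover, this element Γ is an involution (Γ² = 1). -/

import Mathlib

open Matrix
open scoped LinearAlgebra.Projectivization

/-- The Möbius action of `GL(2,K)` on the projective line `ℙ K (Fin 2 → K)`.
Since scalar matrices act trivially, this realizes the action of `PGL₂(K)`;
an element of `PGL₂(K)` is the same as the induced transformation of the
projective line. -/
noncomputable def mobius {K : Type*} [Field K] (M : GL (Fin 2) K)
    (p : ℙ K (Fin 2 → K)) : ℙ K (Fin 2 → K) :=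
  Projectivization.map
    (LinearMap.GeneralLinearGroup.toLinearEquiv
      (Matrix.GeneralLinearGroup.toLin M)).toLinearMap
    (LinearEquiv.injective _) p

namespace MobiusAux

variable {k : Type*} [Field k]

/-- The Möbius action of a linear equivalence on the projective line. -/
noncomputable def mobE (T : (Fin 2 → k) ≃ₗ[k] (Fin 2 → k)) :
    ℙ k (Fin 2 → k) → ℙ k (Fin 2 → k) :=
  Projectivization.map T.toLinearMap T.injective

lemma mobius_eq_mobE (M : GL (Fin 2) k) :
    mobius M = mobE (LinearMap.GeneralLinearGroup.toLinearEquiv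
      (Matrix.GeneralLinearGroup.toLin M)) := rfl

lemma mobE_mk (T : (Fin 2 → k) ≃ₗ[k] (Fin 2 → k)) (v : Fin 2 → k) (hv : v ≠ 0) :
    mobE T (Projectivization.mk k v hv) =
      Projectivization.mk k (T v) (by simp [hv]) :=
  Projectivization.map_mk T.toLinearMap T.injective v hv

lemma mobius_of_equiv (E : (Fin 2 → k) ≃ₗ[k] (Fin 2 → k)) :
    mobius ((Matrix.GeneralLinearGroup.toLin (n := Fin 2) (R := k)).symm
      (LinearMap.GeneralLinearGroup.ofLinearEquiv E)) = mobE E := by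
  rw [mobius_eq_mobE, MulEquiv.apply_symm_apply]
  rfl

lemma indep_of_ne {p q : ℙ k (Fin 2 → k)} (h : p ≠ q) :
    LinearIndependent k ![p.rep, q.rep] := by
  rw [linearIndependent_fin2]
  refine ⟨by simpa using q.rep_nonzero, fun t ht => ?_⟩
  simp only [Matrix.cons_val_one, Matrix.head_cons, Matrix.cons_val_zero] at ht
  apply h
  rw [← p.mk_rep, ← q.mk_rep, Projectivization.mk_eq_mk_iff']
  exact ⟨t, ht⟩

lemma exists_coords {u v : Fin 2 → k} (h : LinearIndependent k ![u, v])
    (w : Fin 2 → k) : ∃ x y : k, w = x • u + y • v := by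
  have hcard : Fintype.card (Fin 2) = Module.finrank k (Fin 2 → k) := by simp
  set B := basisOfLinearIndependentOfCardEqFinrank h hcard with hB
  have h0 : B 0 = u := by
    rw [hB, coe_basisOfLinearIndependentOfCardEqFinrank]; simp
  have h1 : B 1 = v := by
    rw [hB, coe_basisOfLinearIndependentOfCardEqFinrank]; simp
  refine ⟨B.repr w 0, B.repr w 1, ?_⟩
  have hs := B.sum_repr w
  rw [Fin.sum_univ_two, h0, h1] at hs
  exact hs.symm

lemma pair_eq_zero {u v : Fin 2 → k} (h : LinearIndependent k ![u, v])
    {x y : k} (hxy : x • u + y • v = 0) : x = 0 ∧ y = 0 := by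
  have := Fintype.linearIndependent_iff.mp h ![x, y]
    (by simpa [Fin.sum_univ_two] using hxy)
  exact ⟨this 0, this 1⟩

lemma coords_ne {p q r : ℙ k (Fin 2 → k)} (hpq : p ≠ q) (hrp : r ≠ p)
    (hrq : r ≠ q) :
    ∃ x y : k, x ≠ 0 ∧ y ≠ 0 ∧ r.rep = x • p.rep + y • q.rep := by
  obtain ⟨x, y, hxy⟩ := exists_coords (indep_of_ne hpq) r.rep
  refine ⟨x, y, ?_, ?_, hxy⟩
  · rintro rfl
    rw [zero_smul, zero_add] at hxy
    have hy : y ≠ 0 := by rintro rfl; exact r.rep_nonzero (by simp [hxy])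
    apply hrq
    rw [← r.mk_rep, ← q.mk_rep, Projectivization.mk_eq_mk_iff']
    exact ⟨y, hxy.symm⟩
  · rintro rfl
    rw [zero_smul, add_zero] at hxy
    have hx : x ≠ 0 := by rintro rfl; exact r.rep_nonzero (by simp [hxy])
    apply hrp
    rw [← r.mk_rep, ← p.mk_rep, Projectivization.mk_eq_mk_iff']
    exact ⟨x, hxy.symm⟩

/-- A projective transformation fixing three distinct points of `ℙ¹` is the identity. -/
lemma fix_three {E : (Fin 2 → k) ≃ₗ[k] (Fin 2 → k)} {p q r : ℙ k (Fin 2 → k)}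
    (hpq : p ≠ q) (hrp : r ≠ p) (hrq : r ≠ q)
    (hp : mobE E p = p) (hq : mobE E q = q) (hr : mobE E r = r) :
    ∀ z, mobE E z = z := by
  have hind := indep_of_ne hpq
  -- scalars for p and q
  have hp' : Projectivization.mk k (E p.rep) (by simp [p.rep_nonzero]) =
      Projectivization.mk k p.rep p.rep_nonzero := by
    rw [← mobE_mk _ _ p.rep_nonzero]; rw [p.mk_rep]; exact hp
  have hq' : Projectivization.mk k (E q.rep) (by simp [q.rep_nonzero]) =
      Projectivization.mk k q.rep q.rep_nonzero := by
    rw [← mobE_mk _ _ q.rep_nonzero]; rw [q.mk_rep]; exact hq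
  obtain ⟨α, hα⟩ := (Projectivization.mk_eq_mk_iff' k _ _ _ _).mp hp'
  obtain ⟨β, hβ⟩ := (Projectivization.mk_eq_mk_iff' k _ _ _ _).mp hq'
  obtain ⟨x, y, hx, hy, hxy⟩ := coords_ne hpq hrp hrq
  have hrnz : (x • p.rep + y • q.rep : Fin 2 → k) ≠ 0 := hxy ▸ r.rep_nonzero
  have hr' : Projectivization.mk k (E r.rep) (by simp [r.rep_nonzero]) =
      Projectivization.mk k r.rep r.rep_nonzero := by
    rw [← mobE_mk _ _ r.rep_nonzero]; rw [r.mk_rep]; exact hr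
  obtain ⟨γ, hγ⟩ := (Projectivization.mk_eq_mk_iff' k _ _ _ _).mp hr'
  -- show α = β
  have hE : E r.rep = (x * α) • p.rep + (y * β) • q.rep := by
    rw [hxy, map_add, E.map_smul, E.map_smul, ← hα, ← hβ, smul_smul, smul_smul]
  have hγ' : (x * γ) • p.rep + (y * γ) • q.rep = E r.rep := by
    rw [← hγ, hxy, smul_add, smul_smul, smul_smul, mul_comm γ x, mul_comm γ y]
  have hzero : (x * α - x * γ) • p.rep + (y * β - y * γ) • q.rep = 0 := by
    rw [sub_smul, sub_smul]
    rw [hE] at hγ'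
    abel_nf
    linear_combination (norm := module) - hγ'
  obtain ⟨e1, e2⟩ := pair_eq_zero hind hzero
  have hαγ : α = γ := by
    have := sub_eq_zero.mp e1
    rw [mul_comm x α, mul_comm x γ] at this
    exact mul_right_cancel₀ hx this
  have hβγ : β = γ := by
    have := sub_eq_zero.mp e2
    rw [mul_comm y β, mul_comm y γ] at this
    exact mul_right_cancel₀ hy this
  -- E acts as α • id
  have hαne : α ≠ 0 := by
    rintro rfl
    exact p.rep_nonzero (E.injective (by simpa using hα.symm))
  have hEall : ∀ w : Fin 2 → k, E w = α • w := by
    intro w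
    obtain ⟨s, t, rfl⟩ := exists_coords hind w
    rw [map_add, E.map_smul, E.map_smul, ← hα, ← hβ, hαγ, hβγ, smul_add,
      smul_smul, smul_smul, smul_smul, smul_smul, mul_comm γ s, mul_comm γ t]
  intro z
  induction z using Projectivization.ind with
  | h w hw =>
    rw [mobE_mk]
    rw [Projectivization.mk_eq_mk_iff']
    exact ⟨α, (hEall w).symm⟩

end MobiusAux

/-- Let `k` be a field and `a, b, c, d` four distinct points of `ℙ¹(k)`.  Then there
is an element of `PGL₂(k)` (represented by a matrix `M ∈ GL₂(k)`, with elements of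
`PGL₂(k)` identified with the Möbius transformations they induce) swapping `a` with `b`
and `c` with `d`; it is an involution, and it is unique as an element of `PGL₂(k)`,
i.e. any two such matrices induce the same Möbius transformation. -/
theorem unique_involution_swapping_two_pairs
    {k : Type*} [Field k] (a b c d : ℙ k (Fin 2 → k))
    (hab : a ≠ b) (hac : a ≠ c) (had : a ≠ d) (hbc : b ≠ c) (hbd : b ≠ d)
    (hcd : c ≠ d) :
    ∃ M : GL (Fin 2) k,
      mobius M a = b ∧ mobius M b = a ∧ mobius M c = d ∧ mobius M d = c ∧
      (∀ p, mobius M (mobius M p) = p) ∧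
      (∀ M' : GL (Fin 2) k,
        mobius M' a = b → mobius M' b = a → mobius M' c = d → mobius M' d = c →
        ∀ p, mobius M' p = mobius M p) := by
  classical
  open MobiusAux in
  -- setup: u = a.rep, v = b.rep form a basis; coordinates of c and d
  set u := a.rep with hu
  set v := b.rep with hv
  have hind : LinearIndependent k ![u, v] := indep_of_ne hab
  obtain ⟨x, y, hx, hy, hcxy⟩ := coords_ne hab hac.symm hbc.symm
  obtain ⟨x', y', hx', hy', hdxy⟩ := coords_ne hab had.symm hbd.symm
  set s := y * y' with hs_def
  set t := x * x' with ht_def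
  have hs : s ≠ 0 := mul_ne_zero hy hy'
  have ht : t ≠ 0 := mul_ne_zero hx hx'
  have hst : s * t ≠ 0 := mul_ne_zero hs ht
  -- the linear map T : u ↦ s • v, v ↦ t • u
  have hcard : Fintype.card (Fin 2) = Module.finrank k (Fin 2 → k) := by simp
  set B := basisOfLinearIndependentOfCardEqFinrank hind hcard with hB
  have hB0 : B 0 = u := by rw [hB, coe_basisOfLinearIndependentOfCardEqFinrank]; simp
  have hB1 : B 1 = v := by rw [hB, coe_basisOfLinearIndependentOfCardEqFinrank]; simp
  set T : (Fin 2 → k) →ₗ[k] (Fin 2 → k) := B.constr k ![s • v, t • u] with hT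
  have hTu : T u = s • v := by rw [hT, ← hB0, Module.Basis.constr_basis]; simp
  have hTv : T v = t • u := by rw [hT, ← hB1, Module.Basis.constr_basis]; simp
  have hTw : ∀ p q : k, T (p • u + q • v) = (q * t) • u + (p * s) • v := by
    intro p q
    rw [map_add, T.map_smul, T.map_smul, hTu, hTv, smul_smul, smul_smul,
      mul_comm p s, mul_comm q t, add_comm]
  have hTT : ∀ w : Fin 2 → k, T (T w) = (s * t) • w := by
    intro w
    obtain ⟨p, q, rfl⟩ := exists_coords hind w
    rw [hTw, hTw, smul_add, smul_smul, smul_smul]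
    ring_nf
  set E : (Fin 2 → k) ≃ₗ[k] (Fin 2 → k) :=
    LinearEquiv.ofLinear T ((s * t)⁻¹ • T)
      (by
        apply LinearMap.ext; intro w
        simp only [LinearMap.comp_apply, LinearMap.smul_apply, LinearMap.map_smul,
          LinearMap.id_apply, hTT, smul_smul, inv_mul_cancel₀ hst, one_smul])
      (by
        apply LinearMap.ext; intro w
        simp only [LinearMap.comp_apply, LinearMap.smul_apply,
          LinearMap.id_apply, LinearMap.map_smul, hTT, smul_smul,
          mul_inv_cancel₀ hst, inv_mul_cancel₀ hst, one_smul])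
    with hE
  have hEapp : ∀ w, E w = T w := fun w => rfl
  set M : GL (Fin 2) k := (Matrix.GeneralLinearGroup.toLin (n := Fin 2) (R := k)).symm
    (LinearMap.GeneralLinearGroup.ofLinearEquiv E) with hM
  have hmob : mobius M = mobE E := mobius_of_equiv E
  -- action on the four points
  have key : ∀ (z w : ℙ k (Fin 2 → k)), E z.rep = T z.rep → True := fun _ _ _ => trivial
  have act : ∀ (z w : ℙ k (Fin 2 → k)) (μ : k), μ ≠ 0 → T z.rep = μ • w.rep →
      mobius M z = w := by
    intro z w μ hμ hTz
    rw [hmob, ← z.mk_rep, mobE_mk, ← w.mk_rep, Projectivization.mk_eq_mk_iff']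
    exact ⟨μ, by rw [hEapp, hTz]⟩
  have hMa : mobius M a = b := act a b s hs (by rw [← hu, ← hv, hTu])
  have hMb : mobius M b = a := act b a t ht (by rw [← hu, ← hv, hTv])
  have hMc : mobius M c = d := by
    apply act c d (x * y) (mul_ne_zero hx hy)
    rw [hcxy, hdxy, hTw, smul_add, smul_smul, smul_smul]
    rw [← hu, ← hv, ht_def, hs_def]
    ring_nf
  have hMd : mobius M d = c := by
    apply act d c (x' * y') (mul_ne_zero hx' hy')
    rw [hdxy, hcxy, hTw, smul_add, smul_smul, smul_smul]
    rw [← hu, ← hv, ht_def, hs_def]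
    ring_nf
  have hinv : ∀ p, mobius M (mobius M p) = p := by
    intro p
    induction p using Projectivization.ind with
    | h w hw =>
      rw [hmob, mobE_mk, mobE_mk, Projectivization.mk_eq_mk_iff']
      exact ⟨s * t, by rw [hEapp, hEapp, hTT]⟩
  refine ⟨M, hMa, hMb, hMc, hMd, hinv, ?_⟩
  intro M' h1 h2 h3 h4 p
  set F : (Fin 2 → k) ≃ₗ[k] (Fin 2 → k) :=
    LinearMap.GeneralLinearGroup.toLinearEquiv (Matrix.GeneralLinearGroup.toLin M')
    with hF
  have hmob' : mobius M' = mobE F := rfl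
  set G : (Fin 2 → k) ≃ₗ[k] (Fin 2 → k) := E ≪≫ₗ F with hG
  have hcomp : ∀ z, mobE G z = mobE F (mobE E z) := by
    intro z
    induction z using Projectivization.ind with
    | h w hw => rw [mobE_mk, mobE_mk, mobE_mk]; rfl
  have hGa : mobE G a = a := by rw [hcomp, ← hmob, ← hmob', hMa, h2]
  have hGb : mobE G b = b := by rw [hcomp, ← hmob, ← hmob', hMb, h1]
  have hGc : mobE G c = c := by rw [hcomp, ← hmob, ← hmob', hMc, h4]
  have hGid : ∀ z, mobE G z = z := fix_three hab hac.symm hbc.symm hGa hGb hGc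
  calc mobius M' p = mobius M' (mobius M (mobius M p)) := by rw [hinv]
    _ = mobE F (mobE E (mobius M p)) := by rw [hmob', hmob]
    _ = mobE G (mobius M p) := (hcomp _).symm
    _ = mobius M p := hGid _
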